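/- Let X^T be an (n−r−1)×n real matrix, 1 ≤ r ≤ n−2, whose columns x^1,…,x^n have the property that every subset of size n−r−1 is linearly independent, and suppose the columns of the n×(r+1) matrix consisting of the (r+1)×(r+1) identity block I_{r+1} stacked on top of an (n−r−1)×(r+1) matrix B form a basis of the null space of X^T. Then B has no zero entries. -/

import Mathlib

open Matrix

/-- A configuration `p` in `ℝ^r` is `r`-dimensional if its points affinely span `ℝ^r`. -/
def IsRDimensional {n r : ℕ} (p : Fin n → EuclideanSpace ℝ (Fin r)) : Prop :=
  affineSpan ℝ (Set.range p) = ⊤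

/-- A configuration is in general position in `ℝ^r` if every `r+1` of its points are
affinely independent. -/
def InGeneralPosition {n r : ℕ} (p : Fin n → EuclideanSpace ℝ (Fin r)) : Prop :=
  ∀ s : Finset (Fin n), s.card = r + 1 → AffineIndependent ℝ (fun i : s => p i)

/-- `(G, q)` is equivalent to `(G, p)`: corresponding edge lengths agree. -/
def FrameworkEquiv {n r r' : ℕ} (G : SimpleGraph (Fin n))
    (p : Fin n → EuclideanSpace ℝ (Fin r)) (q : Fin n → EuclideanSpace ℝ (Fin r')) : Prop :=
  ∀ i j : Fin n, G.Adj i j → ‖q i - q j‖ = ‖p i - p j‖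

/-- Two configurations are congruent: all pairwise distances agree. -/
def CongruentConfig {n r r' : ℕ} (p : Fin n → EuclideanSpace ℝ (Fin r))
    (q : Fin n → EuclideanSpace ℝ (Fin r')) : Prop :=
  ∀ i j : Fin n, ‖q i - q j‖ = ‖p i - p j‖

/-- `(G, p)` is universally rigid. -/
def UniversallyRigid {n r : ℕ} (G : SimpleGraph (Fin n))
    (p : Fin n → EuclideanSpace ℝ (Fin r)) : Prop :=
  ∀ r' : ℕ, 1 ≤ r' → r' ≤ n - 1 → ∀ q : Fin n → EuclideanSpace ℝ (Fin r'),
    IsRDimensional q → FrameworkEquiv G p q → CongruentConfig p q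

/-- `G` is `k`-vertex connected. -/
def IsKConnected {n : ℕ} (G : SimpleGraph (Fin n)) (k : ℕ) : Prop :=
  (n = k + 1 ∧ G = ⊤) ∨
  (k + 2 ≤ n ∧ ∀ S : Finset (Fin n), S.card = k - 1 →
    (G.induce ((↑S : Set (Fin n))ᶜ)).Connected)

/-- The configuration matrix of `p`. -/
def configMatrix {n r : ℕ} (p : Fin n → EuclideanSpace ℝ (Fin r)) : Matrix (Fin n) (Fin r) ℝ :=
  Matrix.of fun i k => p i k

/-- `Ω` is a stress matrix of `(G, p)`. -/
def IsStressMatrix {n r : ℕ} (G : SimpleGraph (Fin n)) (p : Fin n → EuclideanSpace ℝ (Fin r))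
    (Ω : Matrix (Fin n) (Fin n) ℝ) : Prop :=
  Ω.IsSymm ∧ (∀ i j : Fin n, i ≠ j → ¬ G.Adj i j → Ω i j = 0) ∧
  Ω * configMatrix p = 0 ∧ Ω *ᵥ (fun _ => (1 : ℝ)) = 0

/-- The matrix `[Pᵀ; eᵀ]` obtained by stacking `Pᵀ` on top of the all-ones row `eᵀ`. -/
def galeStack {n r : ℕ} (p : Fin n → EuclideanSpace ℝ (Fin r)) :
    Matrix (Fin r ⊕ Unit) (Fin n) ℝ :=
  Matrix.fromRows (Matrix.of fun k i => p i k) (Matrix.of fun _ _ => (1 : ℝ))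

/-- `Z` is a Gale matrix of `p`: its columns form a basis of the null space of `[Pᵀ; eᵀ]`. -/
def IsGaleMatrix {n r : ℕ} (p : Fin n → EuclideanSpace ℝ (Fin r))
    (Z : Matrix (Fin n) (Fin (n - r - 1)) ℝ) : Prop :=
  LinearIndependent ℝ (fun j : Fin (n - r - 1) => fun i => Z i j) ∧
  Submodule.span ℝ (Set.range (fun j : Fin (n - r - 1) => fun i => Z i j)) =
    LinearMap.ker (galeStack p).mulVecLin

/-- Within the proof of Lemma 3.1: if (after reordering the nodes) the columns of the
`n × (r+1)` block matrix `[I_{r+1}; B]` form a basis of the null space of `Xᵀ`, where every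
`n - r - 1` columns of `Xᵀ` (i.e. rows of `X`) are linearly independent, then `B` has no zero
entries. Here the `n` nodes are indexed by `Fin (r+1) ⊕ Fin (n-r-1)`, the first block carrying
the identity `I_{r+1}` and the second block carrying `B`. -/
theorem no_zero_entries_of_null_space_basis
    (n r : ℕ) (hr : 1 ≤ r) (hrn : r + 2 ≤ n)
    (X : Matrix (Fin (r + 1) ⊕ Fin (n - r - 1)) (Fin (n - r - 1)) ℝ)
    (hgen : ∀ s : Finset (Fin (r + 1) ⊕ Fin (n - r - 1)), s.card = n - r - 1 →
      LinearIndependent ℝ (fun i : s => X i.1))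
    (B : Matrix (Fin (n - r - 1)) (Fin (r + 1)) ℝ)
    (hindep : LinearIndependent ℝ
      (fun j : Fin (r + 1) => fun i => (Matrix.fromRows (1 : Matrix (Fin (r + 1)) (Fin (r + 1)) ℝ) B) i j))
    (hspan : Submodule.span ℝ
        (Set.range (fun j : Fin (r + 1) => fun i =>
          (Matrix.fromRows (1 : Matrix (Fin (r + 1)) (Fin (r + 1)) ℝ) B) i j)) =
      LinearMap.ker Xᵀ.mulVecLin) :
    ∀ (i : Fin (n - r - 1)) (j : Fin (r + 1)), B i j ≠ 0 := by
  intro i j hB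
  have hm1 : 1 ≤ n - r - 1 := by omega
  -- the j-th column of [I; B]
  set c : (Fin (r + 1) ⊕ Fin (n - r - 1)) → ℝ :=
    fun v => (Matrix.fromRows (1 : Matrix (Fin (r + 1)) (Fin (r + 1)) ℝ) B) v j with hc
  have hcker : Xᵀ.mulVecLin c = 0 := by
    have : c ∈ LinearMap.ker Xᵀ.mulVecLin := by
      rw [← hspan]
      exact Submodule.subset_span ⟨j, rfl⟩
    exact this
  have hsum : ∑ v : Fin (r + 1) ⊕ Fin (n - r - 1), c v • X v = 0 := by
    funext k
    have h := congrFun hcker k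
    simp only [Matrix.mulVecLin_apply, Matrix.mulVec, dotProduct,
      Matrix.transpose_apply, Pi.zero_apply] at h
    simpa [Finset.sum_apply, mul_comm] using h
  -- the support set
  set s : Finset (Fin (r + 1) ⊕ Fin (n - r - 1)) :=
    {Sum.inl j} ∪ (Finset.univ.erase i).image Sum.inr with hs
  have hdisj : Disjoint ({Sum.inl j} : Finset (Fin (r + 1) ⊕ Fin (n - r - 1)))
      ((Finset.univ.erase i).image Sum.inr) := by
    simp [Finset.disjoint_left]
  have hcard : s.card = n - r - 1 := by
    rw [hs, Finset.card_union_of_disjoint hdisj, Finset.card_singleton,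
      Finset.card_image_of_injective _ Sum.inr_injective, Finset.card_erase_of_mem
      (Finset.mem_univ i), Finset.card_univ, Fintype.card_fin]
    omega
  have hvanish : ∀ v ∈ Finset.univ, v ∉ s → c v • X v = 0 := by
    rintro (k | i') _ hv
    · have hkj : k ≠ j := by
        rintro rfl
        exact hv (by simp [hs])
      simp [hc, Matrix.fromRows_apply_inl, Matrix.one_apply_ne hkj]
    · have : i' = i := by
        by_contra hne
        exact hv (by simp [hs, hne])
      subst this
      simp [hc, Matrix.fromRows_apply_inr, hB]
  have hsum_s : ∑ v ∈ s, c v • X v = 0 := by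
    rw [Finset.sum_subset (Finset.subset_univ s) hvanish, hsum]
  have hli := hgen s hcard
  have hmem : (Sum.inl j : Fin (r + 1) ⊕ Fin (n - r - 1)) ∈ s := by simp [hs]
  have h0 := (Fintype.linearIndependent_iff.mp hli) (fun v => c v.1)
    (by rw [← Finset.sum_coe_sort s (fun v => c v • X v)] at hsum_s; exact hsum_s)
    ⟨Sum.inl j, hmem⟩
  rw [hc] at h0
  simp [Matrix.fromRows_apply_inl, Matrix.one_apply_eq] at h0
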